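/- Let P be a dynamic path instance with n ≥ 1 and let k ≥ 2 be an integer. If indices i' and i satisfy 0 ≤ i' ≤ i < n and Θ¹(P_{0,i}) < Θ^{k−1}(P_{i+1,n}), then also Θ¹(P_{0,i'}) < Θ^{k−1}(P_{i'+1,n}). That is, the set of indices i ∈ {0,…,n−1} satisfying Θ¹(P_{0,i}) < Θ^{k−1}(P_{i+1,n}) is downward closed. -/
import Mathlib


/-- A dynamic path instance: `n+1` vertices at strictly increasing coordinates
`x 0 < x 1 < ⋯ < x n`, natural-number weights `w i`, positive integer capacities
`c j` (capacity of the edge from `x (j-1)` to `x j`, for `1 ≤ j ≤ n`), and a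
positive travel time `τ` per unit distance. -/
structure DPath where
  n : ℕ
  x : ℕ → ℝ
  w : ℕ → ℕ
  c : ℕ → ℕ
  τ : ℝ
  hx : ∀ i, i < n → x i < x (i + 1)
  hc : ∀ j, 1 ≤ j → j ≤ n → 0 < c j
  hτ : 0 < τ

/-- `P.W a i = w_a + ⋯ + w_i`. -/
def DPath.W (P : DPath) (a i : ℕ) : ℕ := ∑ j ∈ Finset.Icc a i, P.w j

/-- For a sink at `y` in subpath `P_{a,b}`: the minimum capacity
`min_{i+1 ≤ j ≤ k+1} c_j`, where `k` is the index with `x_k < y ≤ x_{k+1}`;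
the edges `j` with `i+1 ≤ j ≤ k+1` are exactly those with `i+1 ≤ j ≤ b` and
`x (j-1) < y`. -/
noncomputable def DPath.cL (P : DPath) (b : ℕ) (y : ℝ) (i : ℕ) : ℕ :=
  sInf (P.c '' {j | i + 1 ≤ j ∧ j ≤ b ∧ P.x (j - 1) < y})

/-- For a sink at `y` in subpath `P_{a,b}`: the minimum capacity
`min_{k+1 ≤ j ≤ i} c_j`, where `k` is the index with `x_k ≤ y < x_{k+1}`;
the edges `j` with `k+1 ≤ j ≤ i` are exactly those with `a+1 ≤ j ≤ i` and
`y < x j`. -/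
noncomputable def DPath.cR (P : DPath) (a : ℕ) (y : ℝ) (i : ℕ) : ℕ :=
  sInf (P.c '' {j | a + 1 ≤ j ∧ j ≤ i ∧ y < P.x j})

/-- Left evacuation time `Θ_L(P_{a,b}, y)`: the maximum, over indices `i` with
`a ≤ i ≤ b`, `x i < y` and `W_{a,i} ≥ 1`, of
`(y − x_i)·τ + ⌈W_{a,i} / min_{i+1 ≤ j ≤ k+1} c_j⌉ − 1`; it is `0` if no such
index exists. -/
noncomputable def ThetaL (P : DPath) (a b : ℕ) (y : ℝ) : ℝ :=
  sSup (insert 0 {t : ℝ | ∃ i, a ≤ i ∧ i ≤ b ∧ P.x i < y ∧ 1 ≤ P.W a i ∧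
    t = (y - P.x i) * P.τ + (⌈(P.W a i : ℝ) / (P.cL b y i : ℝ)⌉ : ℝ) - 1})

/-- Right evacuation time `Θ_R(P_{a,b}, y)`. -/
noncomputable def ThetaR (P : DPath) (a b : ℕ) (y : ℝ) : ℝ :=
  sSup (insert 0 {t : ℝ | ∃ i, a ≤ i ∧ i ≤ b ∧ y < P.x i ∧ 1 ≤ P.W i b ∧
    t = (P.x i - y) * P.τ + (⌈(P.W i b : ℝ) / (P.cR a y i : ℝ)⌉ : ℝ) - 1})

/-- Evacuation time of subpath `P_{a,b}` to sink `y`. -/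
noncomputable def Theta (P : DPath) (a b : ℕ) (y : ℝ) : ℝ :=
  max (ThetaL P a b y) (ThetaR P a b y)

/-- `Θ¹(P_{a,b})`: minimum 1-sink evacuation time of subpath `P_{a,b}`
over sinks `y ∈ [x_a, x_b]`. -/
noncomputable def Theta1 (P : DPath) (a b : ℕ) : ℝ :=
  sInf (Theta P a b '' Set.Icc (P.x a) (P.x b))

/-- `Θᵏ(P_{a,b})`: minimum over all partitions of `{a, …, b}` into at most `k`
nonempty intervals `[f j, f (j+1) - 1]`, of the maximum over the intervals of
`Θ¹`. -/
noncomputable def ThetaK (P : DPath) (k a b : ℕ) : ℝ :=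
  sInf {t : ℝ | ∃ (m : ℕ) (f : ℕ → ℕ), 1 ≤ m ∧ m ≤ k ∧
    f 0 = a ∧ f m = b + 1 ∧ (∀ j, j < m → f j < f (j + 1)) ∧
    t = ⨆ j : Fin m, Theta1 P (f j.val) (f (j.val + 1) - 1)}



lemma DPath.x_mono (P : DPath) {i j : ℕ} (hij : i ≤ j) (hj : j ≤ P.n) : P.x i ≤ P.x j := by
  induction j with
  | zero => simp [Nat.le_zero.mp hij]
  | succ j ih =>
    rcases Nat.lt_or_ge i (j + 1) with h | h
    · exact le_trans (ih (by omega) (by omega)) (le_of_lt (P.hx j (by omega)))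
    · have : i = j + 1 := by omega
      simp [this]

lemma DPath.x_smono (P : DPath) {i j : ℕ} (hij : i < j) (hj : j ≤ P.n) : P.x i < P.x j := by
  obtain ⟨j, rfl⟩ : ∃ j', j = j' + 1 := ⟨j - 1, by omega⟩
  exact lt_of_le_of_lt (P.x_mono (by omega) (by omega)) (P.hx j (by omega))

lemma W_mono_right (P : DPath) {i b' b : ℕ} (h : b' ≤ b) : P.W i b' ≤ P.W i b :=
  Finset.sum_le_sum_of_subset (Finset.Icc_subset_Icc (le_refl _) h)

lemma W_mono_left (P : DPath) {a' a i : ℕ} (h : a' ≤ a) : P.W a i ≤ P.W a' i :=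
  Finset.sum_le_sum_of_subset (Finset.Icc_subset_Icc h (le_refl _))

lemma cL_pos (P : DPath) {b i : ℕ} {y : ℝ} (hib : i + 1 ≤ b) (hbn : b ≤ P.n)
    (hx : P.x i < y) : 0 < P.cL b y i := by
  have hne : (P.c '' {j | i + 1 ≤ j ∧ j ≤ b ∧ P.x (j - 1) < y}).Nonempty :=
    ⟨P.c (i + 1), ⟨i + 1, ⟨le_refl _, hib, by simpa using hx⟩, rfl⟩⟩
  obtain ⟨j, ⟨hj1, hj2, _⟩, hj4⟩ := Nat.sInf_mem hne
  rw [show P.cL b y i = sInf (P.c '' {j | i + 1 ≤ j ∧ j ≤ b ∧ P.x (j - 1) < y}) from rfl, ← hj4]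
  exact P.hc j (by omega) (hj2.trans hbn)

lemma cL_anti (P : DPath) {b' b i : ℕ} {y' y : ℝ} (hb : b' ≤ b) (hy : y' ≤ y)
    (hne : i + 1 ≤ b') (hx : P.x i < y') : P.cL b y i ≤ P.cL b' y' i := by
  have hne' : (P.c '' {j | i + 1 ≤ j ∧ j ≤ b' ∧ P.x (j - 1) < y'}).Nonempty :=
    ⟨P.c (i + 1), ⟨i + 1, ⟨le_refl _, hne, by simpa using hx⟩, rfl⟩⟩
  obtain ⟨j, ⟨hj1, hj2, hj3⟩, hj4⟩ := Nat.sInf_mem hne'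
  rw [show P.cL b' y' i = sInf (P.c '' {j | i + 1 ≤ j ∧ j ≤ b' ∧ P.x (j - 1) < y'}) from rfl,
    ← hj4]
  exact Nat.sInf_le ⟨j, ⟨hj1, hj2.trans hb, hj3.trans_le hy⟩, rfl⟩

lemma cR_pos (P : DPath) {a i : ℕ} {y : ℝ} (hai : a + 1 ≤ i) (hin : i ≤ P.n)
    (hx : y < P.x i) : 0 < P.cR a y i := by
  have hne : (P.c '' {j | a + 1 ≤ j ∧ j ≤ i ∧ y < P.x j}).Nonempty :=
    ⟨P.c i, ⟨i, ⟨hai, le_refl _, hx⟩, rfl⟩⟩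
  obtain ⟨j, ⟨hj1, hj2, _⟩, hj4⟩ := Nat.sInf_mem hne
  rw [show P.cR a y i = sInf (P.c '' {j | a + 1 ≤ j ∧ j ≤ i ∧ y < P.x j}) from rfl, ← hj4]
  exact P.hc j (by omega) (hj2.trans hin)

lemma cR_anti (P : DPath) {a' a i : ℕ} {y y' : ℝ} (ha : a' ≤ a) (hy : y ≤ y')
    (hne : a + 1 ≤ i) (hx : y' < P.x i) : P.cR a' y i ≤ P.cR a y' i := by
  have hne' : (P.c '' {j | a + 1 ≤ j ∧ j ≤ i ∧ y' < P.x j}).Nonempty :=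
    ⟨P.c i, ⟨i, ⟨hne, le_refl _, hx⟩, rfl⟩⟩
  obtain ⟨j, ⟨hj1, hj2, hj3⟩, hj4⟩ := Nat.sInf_mem hne'
  rw [show P.cR a y' i = sInf (P.c '' {j | a + 1 ≤ j ∧ j ≤ i ∧ y' < P.x j}) from rfl, ← hj4]
  exact Nat.sInf_le ⟨j, ⟨by omega, hj2, lt_of_le_of_lt hy hj3⟩, rfl⟩

lemma term_mono {W1 W2 d1 d2 : ℕ} (hW : W1 ≤ W2) (hd : d1 ≤ d2) (hd1 : 0 < d1) :
    (⌈(W1 : ℝ) / (d2 : ℝ)⌉ : ℝ) ≤ (⌈(W2 : ℝ) / (d1 : ℝ)⌉ : ℝ) := by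
  have h : (W1 : ℝ) / (d2 : ℝ) ≤ (W2 : ℝ) / (d1 : ℝ) :=
    div_le_div₀ (by positivity) (by exact_mod_cast hW) (by exact_mod_cast hd1)
      (by exact_mod_cast hd)
  exact_mod_cast Int.ceil_le_ceil h

lemma SL_bdd (P : DPath) (a b : ℕ) (y : ℝ) :
    BddAbove (insert 0 {t : ℝ | ∃ i, a ≤ i ∧ i ≤ b ∧ P.x i < y ∧ 1 ≤ P.W a i ∧
      t = (y - P.x i) * P.τ + (⌈(P.W a i : ℝ) / (P.cL b y i : ℝ)⌉ : ℝ) - 1}) := by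
  apply Set.Finite.bddAbove
  apply Set.Finite.insert
  apply Set.Finite.subset ((Set.finite_Icc a b).image
    (fun i => (y - P.x i) * P.τ + (⌈(P.W a i : ℝ) / (P.cL b y i : ℝ)⌉ : ℝ) - 1))
  rintro t ⟨i, h1, h2, _, _, rfl⟩
  exact ⟨i, ⟨h1, h2⟩, rfl⟩

lemma SR_bdd (P : DPath) (a b : ℕ) (y : ℝ) :
    BddAbove (insert 0 {t : ℝ | ∃ i, a ≤ i ∧ i ≤ b ∧ y < P.x i ∧ 1 ≤ P.W i b ∧
      t = (P.x i - y) * P.τ + (⌈(P.W i b : ℝ) / (P.cR a y i : ℝ)⌉ : ℝ) - 1}) := by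
  apply Set.Finite.bddAbove
  apply Set.Finite.insert
  apply Set.Finite.subset ((Set.finite_Icc a b).image
    (fun i => (P.x i - y) * P.τ + (⌈(P.W i b : ℝ) / (P.cR a y i : ℝ)⌉ : ℝ) - 1))
  rintro t ⟨i, h1, h2, _, _, rfl⟩
  exact ⟨i, ⟨h1, h2⟩, rfl⟩

lemma thetaL_nonneg (P : DPath) (a b : ℕ) (y : ℝ) : 0 ≤ ThetaL P a b y :=
  le_csSup (SL_bdd P a b y) (Set.mem_insert _ _)

lemma thetaR_nonneg (P : DPath) (a b : ℕ) (y : ℝ) : 0 ≤ ThetaR P a b y :=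
  le_csSup (SR_bdd P a b y) (Set.mem_insert _ _)

lemma theta_nonneg (P : DPath) (a b : ℕ) (y : ℝ) : 0 ≤ Theta P a b y :=
  le_trans (thetaL_nonneg P a b y) (le_max_left _ _)

lemma theta1_nonneg (P : DPath) (a b : ℕ) : 0 ≤ Theta1 P a b := by
  unfold Theta1
  rcases Set.eq_empty_or_nonempty (Theta P a b '' Set.Icc (P.x a) (P.x b)) with h | h
  · rw [h, Real.sInf_empty]
  · exact le_csInf h (by rintro t ⟨y, _, rfl⟩; exact theta_nonneg P a b y)

lemma le_thetaL (P : DPath) {a b : ℕ} {y : ℝ} {i : ℕ} (h1 : a ≤ i) (h2 : i ≤ b)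
    (h3 : P.x i < y) (h4 : 1 ≤ P.W a i) :
    (y - P.x i) * P.τ + (⌈(P.W a i : ℝ) / (P.cL b y i : ℝ)⌉ : ℝ) - 1 ≤ ThetaL P a b y :=
  le_csSup (SL_bdd P a b y) (Set.mem_insert_iff.2 (Or.inr ⟨i, h1, h2, h3, h4, rfl⟩))

lemma le_thetaR (P : DPath) {a b : ℕ} {y : ℝ} {i : ℕ} (h1 : a ≤ i) (h2 : i ≤ b)
    (h3 : y < P.x i) (h4 : 1 ≤ P.W i b) :
    (P.x i - y) * P.τ + (⌈(P.W i b : ℝ) / (P.cR a y i : ℝ)⌉ : ℝ) - 1 ≤ ThetaR P a b y :=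
  le_csSup (SR_bdd P a b y) (Set.mem_insert_iff.2 (Or.inr ⟨i, h1, h2, h3, h4, rfl⟩))

lemma thetaL_le (P : DPath) {a b : ℕ} {y : ℝ} {M : ℝ} (hM : 0 ≤ M)
    (h : ∀ i, a ≤ i → i ≤ b → P.x i < y → 1 ≤ P.W a i →
      (y - P.x i) * P.τ + (⌈(P.W a i : ℝ) / (P.cL b y i : ℝ)⌉ : ℝ) - 1 ≤ M) :
    ThetaL P a b y ≤ M := by
  apply csSup_le ⟨0, Set.mem_insert _ _⟩
  rintro t (rfl | ⟨i, h1, h2, h3, h4, rfl⟩)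
  · exact hM
  · exact h i h1 h2 h3 h4

lemma thetaR_le (P : DPath) {a b : ℕ} {y : ℝ} {M : ℝ} (hM : 0 ≤ M)
    (h : ∀ i, a ≤ i → i ≤ b → y < P.x i → 1 ≤ P.W i b →
      (P.x i - y) * P.τ + (⌈(P.W i b : ℝ) / (P.cR a y i : ℝ)⌉ : ℝ) - 1 ≤ M) :
    ThetaR P a b y ≤ M := by
  apply csSup_le ⟨0, Set.mem_insert _ _⟩
  rintro t (rfl | ⟨i, h1, h2, h3, h4, rfl⟩)
  · exact hM
  · exact h i h1 h2 h3 h4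

lemma theta1_mono_right (P : DPath) {a b' b : ℕ} (hab : a ≤ b') (hb : b' ≤ b)
    (hbn : b ≤ P.n) : Theta1 P a b' ≤ Theta1 P a b := by
  have hb'n : b' ≤ P.n := hb.trans hbn
  apply le_csInf (Set.Nonempty.image _ (Set.nonempty_Icc.2 (P.x_mono (hab.trans hb) hbn)))
  rintro t ⟨y, ⟨hy1, hy2⟩, rfl⟩
  set y' := min y (P.x b') with hy'def
  have hy'1 : P.x a ≤ y' := le_min hy1 (P.x_mono hab hb'n)
  have hy'y : y' ≤ y := min_le_left _ _
  have hstep : Theta1 P a b' ≤ Theta P a b' y' :=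
    csInf_le ⟨0, by rintro s ⟨z, _, rfl⟩; exact theta_nonneg P a b' z⟩
      ⟨y', ⟨hy'1, min_le_right _ _⟩, rfl⟩
  refine hstep.trans (max_le_max ?_ ?_)
  · -- left part
    apply thetaL_le _ (thetaL_nonneg P a b y)
    intro i h1 h2 h3 h4
    have hxiy : P.x i < y := lt_of_lt_of_le h3 hy'y
    have hib' : i < b' := by
      by_contra hcon
      exact absurd (lt_of_lt_of_le h3 (min_le_right _ _))
        (not_lt.2 (P.x_mono (not_lt.mp hcon) (h2.trans hb'n)))
    have hcl : P.cL b y i ≤ P.cL b' y' i := cL_anti P hb hy'y (by omega) h3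
    have hpos : 0 < P.cL b y i := cL_pos P (by omega) hbn hxiy
    refine le_trans ?_ (le_thetaL P h1 (h2.trans hb) hxiy h4)
    have hA : (y' - P.x i) * P.τ ≤ (y - P.x i) * P.τ :=
      mul_le_mul_of_nonneg_right (sub_le_sub_right hy'y _) (le_of_lt P.hτ)
    have hC := term_mono (le_refl (P.W a i)) hcl hpos
    linarith
  · -- right part
    apply thetaR_le _ (thetaR_nonneg P a b y)
    intro i h1 h2 h3 h4
    rcases le_total y (P.x b') with hle | hle
    · have hyy : y' = y := min_eq_left hle
      rw [hyy] at h3 ⊢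
      have hW : P.W i b' ≤ P.W i b := W_mono_right P hb
      have hai : a < i := by
        by_contra hcon
        exact absurd (lt_of_le_of_lt hy1 h3) (not_lt.2 (P.x_mono (not_lt.mp hcon)
          (hab.trans hb'n)))
      have hpos : 0 < P.cR a y i := cR_pos P (by omega) ((h2.trans hb).trans hbn) h3
      refine le_trans ?_ (le_thetaR P h1 (h2.trans hb) h3 (h4.trans hW))
      have hC := term_mono hW (le_refl (P.cR a y i)) hpos
      linarith
    · exfalso
      have : y' = P.x b' := min_eq_right hle
      rw [this] at h3
      exact absurd h3 (not_lt.2 (P.x_mono h2 hb'n))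

lemma theta1_mono_left (P : DPath) {a' a b : ℕ} (ha : a' ≤ a) (hab : a ≤ b)
    (hbn : b ≤ P.n) : Theta1 P a b ≤ Theta1 P a' b := by
  have hann : a ≤ P.n := hab.trans hbn
  apply le_csInf (Set.Nonempty.image _ (Set.nonempty_Icc.2 (P.x_mono (ha.trans hab) hbn)))
  rintro t ⟨y, ⟨hy1, hy2⟩, rfl⟩
  set y' := max y (P.x a) with hy'def
  have hy'2 : y' ≤ P.x b := max_le hy2 (P.x_mono hab hbn)
  have hyy' : y ≤ y' := le_max_left _ _
  have hstep : Theta1 P a b ≤ Theta P a b y' :=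
    csInf_le ⟨0, by rintro s ⟨z, _, rfl⟩; exact theta_nonneg P a b z⟩
      ⟨y', ⟨le_max_right _ _, hy'2⟩, rfl⟩
  refine hstep.trans (max_le_max ?_ ?_)
  · -- left part
    apply thetaL_le _ (thetaL_nonneg P a' b y)
    intro i h1 h2 h3 h4
    rcases le_total (P.x a) y with hle | hle
    · have hyy : y' = y := max_eq_left hle
      rw [hyy] at h3 ⊢
      have hW : P.W a i ≤ P.W a' i := W_mono_left P ha
      have hib : i < b := by
        by_contra hcon
        exact absurd (lt_of_lt_of_le h3 hy2) (not_lt.2 (P.x_mono (not_lt.mp hcon) (h2.trans hbn)))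
      have hpos : 0 < P.cL b y i := cL_pos P (by omega) hbn h3
      refine le_trans ?_ (le_thetaL P (ha.trans h1) h2 h3 (h4.trans hW))
      have hC := term_mono hW (le_refl (P.cL b y i)) hpos
      linarith
    · exfalso
      have : y' = P.x a := max_eq_right hle
      rw [this] at h3
      exact absurd h3 (not_lt.2 (P.x_mono h1 (h2.trans hbn)))
  · -- right part
    apply thetaR_le _ (thetaR_nonneg P a' b y)
    intro i h1 h2 h3 h4
    have hyxi : y < P.x i := lt_of_le_of_lt hyy' h3
    have hai : a < i := by
      by_contra hcon
      exact absurd (lt_of_le_of_lt (le_max_right _ _) h3)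
        (not_lt.2 (P.x_mono (not_lt.mp hcon) hann))
    have hcr : P.cR a' y i ≤ P.cR a y' i := cR_anti P ha hyy' (by omega) h3
    have hpos : 0 < P.cR a' y i := cR_pos P (by omega) (h2.trans hbn) hyxi
    refine le_trans ?_ (le_thetaR P (ha.trans h1) h2 hyxi h4)
    have hA : (P.x i - y') * P.τ ≤ (P.x i - y) * P.τ :=
      mul_le_mul_of_nonneg_right (sub_le_sub_left hyy' _) (le_of_lt P.hτ)
    have hC := term_mono (le_refl (P.W i b)) hcr hpos
    linarith

lemma f_mono {f : ℕ → ℕ} {m : ℕ} (hf : ∀ j, j < m → f j < f (j + 1)) :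
    ∀ {j1 j2 : ℕ}, j1 ≤ j2 → j2 ≤ m → f j1 ≤ f j2 := by
  intro j1 j2 h12 h2m
  induction j2 with
  | zero => simp [Nat.le_zero.mp h12]
  | succ j ih =>
    rcases Nat.lt_or_ge j1 (j + 1) with h | h
    · exact le_trans (ih (by omega) (by omega)) (le_of_lt (hf j (by omega)))
    · have : j1 = j + 1 := by omega
      simp [this]

lemma thetaK_bddBelow (P : DPath) (K a b : ℕ) :
    BddBelow {t : ℝ | ∃ (m : ℕ) (f : ℕ → ℕ), 1 ≤ m ∧ m ≤ K ∧
      f 0 = a ∧ f m = b + 1 ∧ (∀ j, j < m → f j < f (j + 1)) ∧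
      t = ⨆ j : Fin m, Theta1 P (f j.val) (f (j.val + 1) - 1)} := by
  refine ⟨0, ?_⟩
  rintro t ⟨m, f, hm1, _, _, _, _, rfl⟩
  haveI : Nonempty (Fin m) := ⟨⟨0, hm1⟩⟩
  exact le_ciSup_of_le (Set.Finite.bddAbove (Set.finite_range _)) ⟨0, hm1⟩
    (theta1_nonneg P _ _)

lemma thetaK_anti (P : DPath) {K a' a : ℕ} (hK : 1 ≤ K) (ha : a' ≤ a) (han : a ≤ P.n) :
    ThetaK P K a P.n ≤ ThetaK P K a' P.n := by
  apply le_csInf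
  · refine ⟨_, 1, (fun j => if j = 0 then a' else P.n + 1), le_refl _, hK, by simp, by simp, ?_, rfl⟩
    intro j hj
    interval_cases j
    simp
    omega
  · rintro t ⟨m, f, hm1, hmK, hf0, hfm, hfs, rfl⟩
    obtain ⟨s, hsm, hsa, hs1a⟩ : ∃ s, s < m ∧ f s ≤ a ∧ a < f (s + 1) := by
      refine ⟨Nat.findGreatest (fun j => f j ≤ a) (m - 1), ?_, ?_, ?_⟩
      · have := Nat.findGreatest_le (P := fun j => f j ≤ a) (m - 1)
        omega
      · exact Nat.findGreatest_spec (P := fun j => f j ≤ a) (Nat.zero_le _)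
          (show f 0 ≤ a by rw [hf0]; exact ha)
      · rcases Nat.lt_or_ge (m - 1) (Nat.findGreatest (fun j => f j ≤ a) (m - 1) + 1) with h | h
        · have hle := Nat.findGreatest_le (P := fun j => f j ≤ a) (m - 1)
          have heq : Nat.findGreatest (fun j => f j ≤ a) (m - 1) + 1 = m := by omega
          rw [heq, hfm]; omega
        · by_contra hcon
          exact Nat.findGreatest_is_greatest (Nat.lt_succ_self _) h (not_lt.mp hcon)
    set g : ℕ → ℕ := fun j => if j = 0 then a else f (j + s) with hgdef
    clear_value g
    have hg0 : g 0 = a := by rw [hgdef]; simp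
    have hgm' : g (m - s) = P.n + 1 := by
      have h1 : m - s ≠ 0 := by omega
      have h2 : m - s + s = m := by omega
      rw [hgdef]; simp only [if_neg h1, h2, hfm]
    have hgs : ∀ j, j < m - s → g j < g (j + 1) := by
      intro j hj
      rcases Nat.eq_zero_or_pos j with rfl | hj0
      · rw [hgdef]
        simp only [if_pos rfl, if_neg (Nat.one_ne_zero)]
        have : 1 + s = s + 1 := by omega
        rw [this]; exact hs1a
      · have h1 : j ≠ 0 := by omega
        have h2 : j + 1 ≠ 0 := by omega
        rw [hgdef]
        simp only [if_neg h1, if_neg h2]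
        have : j + 1 + s = j + s + 1 := by omega
        rw [this]
        exact hfs (j + s) (by omega)
    have hmem : ThetaK P K a P.n ≤ ⨆ j : Fin (m - s), Theta1 P (g j.val) (g (j.val + 1) - 1) :=
      csInf_le (thetaK_bddBelow P K a P.n)
        ⟨m - s, g, by omega, by omega, hg0, hgm', hgs, rfl⟩
    refine hmem.trans ?_
    haveI : Nonempty (Fin (m - s)) := ⟨⟨0, by omega⟩⟩
    haveI : Nonempty (Fin m) := ⟨⟨0, hm1⟩⟩
    have hbdd : BddAbove (Set.range fun j : Fin m => Theta1 P (f j.val) (f (j.val + 1) - 1)) :=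
      Set.Finite.bddAbove (Set.finite_range _)
    apply ciSup_le
    intro j
    rcases Nat.eq_zero_or_pos j.val with hj0 | hj0
    · have hterm : Theta1 P (g j.val) (g (j.val + 1) - 1) ≤ Theta1 P (f s) (f (s + 1) - 1) := by
        rw [hj0]
        have hg1 : g 1 = f (s + 1) := by
          rw [hgdef]
          simp only [if_neg Nat.one_ne_zero]
          congr 1
          omega
        rw [hg0, show (0:ℕ) + 1 = 1 from rfl, hg1]
        have hfs1n : f (s + 1) ≤ P.n + 1 := by
          rw [← hfm]; exact f_mono hfs (by omega) (le_refl _)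
        exact theta1_mono_left P hsa (by omega) (by omega)
      exact hterm.trans (le_ciSup_of_le hbdd ⟨s, hsm⟩ (le_refl _))
    · have h1 : j.val ≠ 0 := by omega
      have h2 : j.val + 1 ≠ 0 := by omega
      have heq : Theta1 P (g j.val) (g (j.val + 1) - 1)
          = Theta1 P (f (j.val + s)) (f (j.val + s + 1) - 1) := by
        rw [hgdef]
        simp only [if_neg h1, if_neg h2]
        have h3 : j.val + 1 + s = j.val + s + 1 := by omega
        rw [h3]
      rw [heq]
      have hjs : j.val + s < m := Nat.add_lt_of_lt_sub j.isLt
      exact le_ciSup_of_le hbdd ⟨j.val + s, hjs⟩ (le_refl _)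


/-- the set of indices `i ∈ {0,…,n−1}` with
`Θ¹(P_{0,i}) < Θ^{k−1}(P_{i+1,n})` is downward closed. -/
theorem stmt15 (P : DPath) (hn : 1 ≤ P.n) (k : ℕ) (hk : 2 ≤ k)
    (i' i : ℕ) (hi'i : i' ≤ i) (hi : i < P.n)
    (h : Theta1 P 0 i < ThetaK P (k - 1) (i + 1) P.n) :
    Theta1 P 0 i' < ThetaK P (k - 1) (i' + 1) P.n := by
  have h1 : Theta1 P 0 i' ≤ Theta1 P 0 i :=
    theta1_mono_right P (Nat.zero_le _) hi'i (le_of_lt hi)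
  have h2 : ThetaK P (k - 1) (i + 1) P.n ≤ ThetaK P (k - 1) (i' + 1) P.n :=
    thetaK_anti P (by omega) (by omega) (by omega)
  linarith
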